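/- Let A ≥ B ≥ 1 be integers, a and b nonzero real numbers, and y_1,…,y_A, z_1,…,z_B real numbers. In ℝ[X] set P(X) = a·Π_{i=1}^{A}(X − y_i) and D(X) = b·Π_{i=1}^{B}(X − z_i), let C = A − B, and let Q be the quotient in the division P = D·Q + R with deg R < B. Then the constant coefficient of Q equals (a/b)·(−1)^C·Σ_{1 ≤ τ_1 ≤ τ_2 ≤ ⋯ ≤ τ_C ≤ A} Π_{i=1}^{C} (y_{τ_i + i − 1} − z_{τ_i}), with the conventions y_i = 0 for i > A and z_i = 0 for i > B. -/

import Mathlib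

open Polynomial Finset

noncomputable def Pm (n : ℕ) (y : ℕ → ℝ) : Polynomial ℝ :=
  ∏ i ∈ Finset.range n, (X - Polynomial.C (y (i + 1)))

lemma Pm_monic (n : ℕ) (y : ℕ → ℝ) : (Pm n y).Monic :=
  monic_prod_of_monic _ _ fun _ _ => monic_X_sub_C _

lemma Pm_natDegree (n : ℕ) (y : ℕ → ℝ) : (Pm n y).natDegree = n := by
  have h := natDegree_prod_of_monic (Finset.range n)
    (fun i => (X - Polynomial.C (y (i+1)))) (fun i _ => monic_X_sub_C _)
  simpa [Pm] using h

lemma Pm_degree (n : ℕ) (y : ℕ → ℝ) : (Pm n y).degree = n := by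
  rw [degree_eq_natDegree (Pm_monic n y).ne_zero, Pm_natDegree]

lemma Pm_succ (n : ℕ) (y : ℕ → ℝ) :
    Pm (n + 1) y = (X - Polynomial.C (y 1)) * Pm n (fun k => y (k + 1)) := by
  rw [Pm, Finset.prod_range_succ', mul_comm]
  rfl

lemma C_mul_divByMonic (c : ℝ) (p q : Polynomial ℝ) (hq : q.Monic) :
    (Polynomial.C c * p) /ₘ q = Polynomial.C c * (p /ₘ q) := by
  refine (div_modByMonic_unique (Polynomial.C c * (p /ₘ q)) (Polynomial.C c * (p %ₘ q)) hq
    ⟨?_, ?_⟩).1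
  · have h := modByMonic_add_div p q
    calc Polynomial.C c * (p %ₘ q) + q * (Polynomial.C c * (p /ₘ q))
        = Polynomial.C c * (p %ₘ q + q * (p /ₘ q)) := by ring
      _ = Polynomial.C c * p := by rw [h]
  · calc ((Polynomial.C c) * (p %ₘ q)).degree = (c • (p %ₘ q)).degree := by
          rw [smul_eq_C_mul]
      _ ≤ (p %ₘ q).degree := degree_smul_le _ _
      _ < q.degree := degree_modByMonic_lt p hq

noncomputable def Ssum (A Cc : ℕ) (y z : ℕ → ℝ) : ℝ :=
  ∑ τ ∈ Finset.univ.filter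
      (fun τ : Fin Cc → Fin A => ∀ i j : Fin Cc, i ≤ j → τ i ≤ τ j),
    ∏ i : Fin Cc, (y ((τ i : ℕ) + 1 + (i : ℕ)) - z ((τ i : ℕ) + 1))

lemma Ssum_zero (A : ℕ) (y z : ℕ → ℝ) : Ssum A 0 y z = 1 := by
  rw [Ssum]
  rw [Finset.filter_true_of_mem (fun τ _ => fun i => i.elim0)]
  simp

lemma Ssum_diag (A : ℕ) (y z : ℕ → ℝ) (hy : ∀ i, A < i → y i = 0)
    (hz : ∀ i, 0 < i → z i = 0) :
    Ssum A A y z = ∏ i ∈ Finset.range A, y (i + 1) := by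
  cases A with
  | zero => simp [Ssum_zero]
  | succ A' =>
    rw [Ssum]
    rw [Finset.sum_eq_single (fun _ => (0 : Fin (A' + 1)))]
    · rw [← Fin.prod_univ_eq_prod_range (fun i => y (i + 1))]
      refine Finset.prod_congr rfl fun i _ => ?_
      show y ((0:ℕ) + 1 + (i:ℕ)) - z ((0:ℕ) + 1) = y ((i:ℕ) + 1)
      rw [hz 1 one_pos]
      rw [Nat.zero_add, Nat.add_comm 1 (i:ℕ)]
      ring
    · intro τ hτ hne
      simp only [Finset.mem_filter, Finset.mem_univ, true_and] at hτ
      have hex : ∃ j, τ j ≠ 0 := by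
        by_contra hc
        push_neg at hc
        exact hne (funext hc)
      obtain ⟨j, hj⟩ := hex
      have h1 : 1 ≤ (τ (Fin.last A') : ℕ) := by
        have := hτ j (Fin.last A') (Fin.le_last j)
        have hj' : 1 ≤ (τ j : ℕ) := Nat.one_le_iff_ne_zero.2 (fun hc => hj (Fin.ext hc))
        omega
      refine Finset.prod_eq_zero (Finset.mem_univ (Fin.last A')) ?_
      rw [hy _ (by rw [Fin.val_last]; omega), hz _ (by omega)]
      ring
    · intro h
      exact absurd (Finset.mem_filter.2 ⟨Finset.mem_univ _, fun i j _ => le_refl _⟩) h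

lemma Ssum_rec (A Cc : ℕ) (y z : ℕ → ℝ)
    (hy : ∀ i : ℕ, A + 1 < i → y i = 0) (hzA : z (A + 1) = 0) :
    Ssum (A + 1) (Cc + 1) y z
      = Ssum A (Cc + 1) (fun k => y (k + 1)) (fun k => z (k + 1))
        + (y 1 - z 1) * Ssum A Cc (fun k => y (k + 1)) z := by
  classical
  have hsplit := Finset.sum_filter_add_sum_filter_not
    (Finset.univ.filter (fun τ : Fin (Cc+1) → Fin (A+1) => ∀ i j, i ≤ j → τ i ≤ τ j))
    (fun τ => τ 0 = 0)
    (fun τ => ∏ i : Fin (Cc+1), (y ((τ i : ℕ) + 1 + (i : ℕ)) - z ((τ i : ℕ) + 1)))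
  rw [Ssum, ← hsplit]
  -- Part (b) : τ 0 ≠ 0
  have hb : (∑ τ ∈ (Finset.univ.filter (fun τ : Fin (Cc+1) → Fin (A+1) =>
        ∀ i j, i ≤ j → τ i ≤ τ j)).filter (fun τ => ¬ τ 0 = 0),
        ∏ i : Fin (Cc+1), (y ((τ i : ℕ) + 1 + (i : ℕ)) - z ((τ i : ℕ) + 1)))
      = Ssum A (Cc + 1) (fun k => y (k + 1)) (fun k => z (k + 1)) := by
    rw [Ssum]
    refine (Finset.sum_nbij (fun σ => fun k => (σ k).succ) ?_ ?_ ?_ ?_).symm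
    · intro σ hσ
      simp only [Finset.mem_filter, Finset.mem_univ, true_and] at hσ ⊢
      refine ⟨fun i j hij => Fin.succ_le_succ_iff.mpr (hσ i j hij), ?_⟩
      exact Fin.succ_ne_zero _
    · intro σ _ σ' _ h
      funext k
      exact Fin.succ_injective _ (congrFun h k)
    · intro τ hτ
      simp only [Finset.coe_filter, Finset.mem_filter, Finset.mem_univ, true_and,
        Set.mem_setOf_eq] at hτ
      obtain ⟨hmono, hne⟩ := hτ
      have h1 : ∀ k, 1 ≤ (τ k : ℕ) := by
        intro k
        have h0 : (τ 0 : ℕ) ≠ 0 := fun hc => hne (Fin.ext hc)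
        have hk := hmono 0 k (Fin.zero_le k)
        rw [Fin.le_def] at hk
        omega
      refine ⟨fun k => ⟨(τ k : ℕ) - 1, by have := (τ k).isLt; have := h1 k; omega⟩, ?_, ?_⟩
      · simp only [Finset.coe_filter, Finset.mem_filter, Finset.mem_univ, true_and,
          Set.mem_setOf_eq]
        intro i j hij
        rw [Fin.le_def]
        have := hmono i j hij
        rw [Fin.le_def] at this
        exact Nat.sub_le_sub_right this 1
      · funext k
        apply Fin.ext
        simp only [Fin.val_succ]
        have := h1 k
        omega
    · intro σ hσ
      refine Finset.prod_congr rfl fun i _ => ?_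
      show y ((σ i : ℕ) + 1 + (i : ℕ) + 1) - z ((σ i : ℕ) + 1 + 1)
        = y ((((σ i).succ : Fin (A+1)) : ℕ) + 1 + (i : ℕ)) - z ((((σ i).succ : Fin (A+1)) : ℕ) + 1)
      rw [Fin.val_succ]
      have e : (σ i : ℕ) + 1 + (i : ℕ) + 1 = (σ i : ℕ) + 1 + 1 + (i : ℕ) := by omega
      rw [e]
  -- Part (a) : τ 0 = 0
  have ha2 : (∑ σ ∈ Finset.univ.filter (fun σ : Fin Cc → Fin (A+1) =>
        ∀ i j, i ≤ j → σ i ≤ σ j),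
        ∏ i : Fin Cc, (y ((σ i : ℕ) + 1 + (i : ℕ) + 1) - z ((σ i : ℕ) + 1)))
      = Ssum A Cc (fun k => y (k + 1)) z := by
    rw [Ssum]
    rw [← Finset.sum_filter_add_sum_filter_not
      (Finset.univ.filter (fun σ : Fin Cc → Fin (A+1) => ∀ i j, i ≤ j → σ i ≤ σ j))
      (fun σ => ∀ i, (σ i : ℕ) < A)]
    have hzero : (∑ σ ∈ (Finset.univ.filter (fun σ : Fin Cc → Fin (A+1) =>
          ∀ i j, i ≤ j → σ i ≤ σ j)).filter (fun σ => ¬ ∀ i, (σ i : ℕ) < A),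
          ∏ i : Fin Cc, (y ((σ i : ℕ) + 1 + (i : ℕ) + 1) - z ((σ i : ℕ) + 1))) = 0 := by
      refine Finset.sum_eq_zero fun σ hσ => ?_
      simp only [Finset.mem_filter, Finset.mem_univ, true_and, not_forall, not_lt] at hσ
      obtain ⟨-, i, hi⟩ := hσ
      have hiA : (σ i : ℕ) = A := by have := (σ i).isLt; omega
      refine Finset.prod_eq_zero (Finset.mem_univ i) ?_
      rw [hiA, hy _ (by omega), hzA]
      ring
    rw [hzero, add_zero]
    refine (Finset.sum_nbij (fun ρ => fun k => Fin.castSucc (ρ k)) ?_ ?_ ?_ ?_).symm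
    · intro ρ hρ
      simp only [Finset.mem_filter, Finset.mem_univ, true_and] at hρ ⊢
      refine ⟨fun i j hij => Fin.castSucc_le_castSucc_iff.mpr (hρ i j hij), ?_⟩
      intro i
      simp only [Fin.coe_castSucc]
      exact (ρ i).isLt
    · intro ρ _ ρ' _ h
      funext k
      exact Fin.castSucc_injective _ (congrFun h k)
    · intro σ hσ
      simp only [Finset.coe_filter, Finset.mem_filter, Finset.mem_univ, true_and,
        Set.mem_setOf_eq] at hσ
      obtain ⟨hmono, hlt⟩ := hσ
      refine ⟨fun k => ⟨(σ k : ℕ), hlt k⟩, ?_, ?_⟩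
      · simp only [Finset.coe_filter, Finset.mem_filter, Finset.mem_univ, true_and,
          Set.mem_setOf_eq]
        intro i j hij
        rw [Fin.le_def]
        have := hmono i j hij
        rw [Fin.le_def] at this
        exact this
      · funext k
        apply Fin.ext
        simp [Fin.coe_castSucc]
    · intro ρ _
      refine Finset.prod_congr rfl fun i _ => ?_
      show y ((ρ i : ℕ) + 1 + (i : ℕ) + 1) - z ((ρ i : ℕ) + 1)
        = y (((Fin.castSucc (ρ i) : Fin (A+1)) : ℕ) + 1 + (i : ℕ) + 1)
          - z (((Fin.castSucc (ρ i) : Fin (A+1)) : ℕ) + 1)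
      rw [Fin.coe_castSucc]
  have ha : (∑ τ ∈ (Finset.univ.filter (fun τ : Fin (Cc+1) → Fin (A+1) =>
        ∀ i j, i ≤ j → τ i ≤ τ j)).filter (fun τ => τ 0 = 0),
        ∏ i : Fin (Cc+1), (y ((τ i : ℕ) + 1 + (i : ℕ)) - z ((τ i : ℕ) + 1)))
      = (y 1 - z 1) * Ssum A Cc (fun k => y (k + 1)) z := by
    rw [← ha2, Finset.mul_sum]
    refine Finset.sum_nbij (fun τ => fun k => τ k.succ) ?_ ?_ ?_ ?_
    · intro τ hτ
      simp only [Finset.mem_filter, Finset.mem_univ, true_and] at hτ ⊢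
      exact fun i j hij => hτ.1 i.succ j.succ (Fin.succ_le_succ_iff.mpr hij)
    · intro τ hτ τ' hτ' h
      simp only [Finset.coe_filter, Finset.mem_filter, Finset.mem_univ, true_and,
        Set.mem_setOf_eq] at hτ hτ'
      funext k
      induction k using Fin.cases with
      | zero => rw [hτ.2, hτ'.2]
      | succ k' => exact congrFun h k'
    · intro σ hσ
      simp only [Finset.coe_filter, Finset.mem_filter, Finset.mem_univ, true_and,
        Set.mem_setOf_eq] at hσ
      refine ⟨Fin.cases 0 σ, ?_, ?_⟩
      · simp only [Finset.coe_filter, Finset.mem_filter, Finset.mem_univ, true_and,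
          Set.mem_setOf_eq]
        refine ⟨?_, by simp⟩
        intro i j hij
        induction i using Fin.cases with
        | zero =>
          simp only [Fin.cases_zero]
          exact Fin.zero_le _
        | succ i' =>
          induction j using Fin.cases with
          | zero =>
            rw [Fin.le_def] at hij
            simp [Fin.val_succ] at hij
          | succ j' =>
            simp only [Fin.cases_succ]
            exact hσ i' j' (by rwa [Fin.succ_le_succ_iff] at hij)
      · funext k
        simp [Fin.cases_succ]
    · intro τ hτ
      simp only [Finset.mem_filter, Finset.mem_univ, true_and] at hτ
      obtain ⟨hmono, hτ0⟩ := hτ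
      rw [Fin.prod_univ_succ, hτ0]
      norm_num
      left
      refine Finset.prod_congr rfl fun i _ => ?_
      have e : (τ i.succ : ℕ) + 1 + ((i : ℕ) + 1) = (τ i.succ : ℕ) + 1 + (i : ℕ) + 1 := by omega
      rw [e]
  rw [ha, hb]
  ring

lemma key : ∀ A : ℕ, ∀ B : ℕ, B ≤ A → ∀ y z : ℕ → ℝ,
    (∀ i, A < i → y i = 0) → (∀ i, B < i → z i = 0) →
    ((Pm A y) /ₘ (Pm B z)).coeff 0 = (-1 : ℝ) ^ (A - B) * Ssum A (A - B) y z := by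
  intro A
  induction A using Nat.strong_induction_on with
  | _ A IH =>
    intro B hBA y z hy hz
    rcases eq_or_lt_of_le hBA with hEq | hlt
    · subst hEq
      have hdeg : (Pm B y - Pm B z).degree < (Pm B z).degree := by
        have e1 : (Pm B y).degree = (Pm B z).degree := by
          rw [Pm_degree, Pm_degree]
        have e2 : (Pm B y).leadingCoeff = (Pm B z).leadingCoeff := by
          rw [(Pm_monic B y).leadingCoeff, (Pm_monic B z).leadingCoeff]
        have h := degree_sub_lt e1 (Pm_monic B y).ne_zero e2
        calc (Pm B y - Pm B z).degree < (Pm B y).degree := h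
          _ = (Pm B z).degree := e1
      have h1 := (div_modByMonic_unique 1 (Pm B y - Pm B z) (Pm_monic B z)
        ⟨by ring, hdeg⟩).1
      rw [h1, Nat.sub_self, Ssum_zero]
      simp
    · rcases B with _ | B'
      · -- B = 0
        have hPm0 : Pm 0 z = 1 := by rw [Pm]; simp
        rw [hPm0, divByMonic_one, coeff_zero_eq_eval_zero, Pm, eval_prod]
        simp only [eval_sub, eval_X, eval_C, zero_sub]
        rw [Nat.sub_zero, Ssum_diag A y z hy (fun i hi => hz i hi)]
        have hneg : ∀ i ∈ Finset.range A, -(y (i+1)) = (-1) * y (i+1) := fun i _ => by ring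
        rw [Finset.prod_congr rfl hneg, Finset.prod_mul_distrib, Finset.prod_const,
          Finset.card_range]
      · -- B = B' + 1 < A
        obtain ⟨A', rfl⟩ : ∃ A', A = A' + 1 := ⟨A - 1, by omega⟩
        have hyA' : ∀ i, A' < i → (fun k => y (k+1)) i = 0 := fun i hi => hy (i+1) (by omega)
        have hzB' : ∀ i, B' < i → (fun k => z (k+1)) i = 0 := fun i hi => hz (i+1) (by omega)
        have IH1 := IH A' (by omega) B' (by omega) (fun k => y (k+1)) (fun k => z (k+1))
          hyA' hzB'
        have IH2 := IH A' (by omega) (B'+1) (by omega) (fun k => y (k+1)) z hyA' hz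
        have hM := Pm_monic (B'+1) z
        have hM' := Pm_monic B' (fun k => z (k+1))
        have h2 := modByMonic_add_div (Pm A' (fun k => y (k+1))) (Pm B' (fun k => z (k+1)))
        have h3 := modByMonic_add_div
          (Polynomial.C (z 1 - y 1) * Pm A' (fun k => y (k+1))) (Pm (B'+1) z)
        have hPd := Pm_succ A' y
        have hMd := Pm_succ B' z
        have hC : Polynomial.C (z 1 - y 1) = Polynomial.C (z 1) - Polynomial.C (y 1) :=
          map_sub _ _ _
        have hq : Pm (A'+1) y /ₘ Pm (B'+1) z
            = (Pm A' (fun k => y (k+1)) /ₘ Pm B' (fun k => z (k+1)))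
              + (Polynomial.C (z 1 - y 1) * Pm A' (fun k => y (k+1))) /ₘ Pm (B'+1) z := by
          refine (div_modByMonic_unique _
            ((X - Polynomial.C (z 1)) * (Pm A' (fun k => y (k+1)) %ₘ Pm B' (fun k => z (k+1)))
              + (Polynomial.C (z 1 - y 1) * Pm A' (fun k => y (k+1))) %ₘ Pm (B'+1) z)
            hM ⟨?_, ?_⟩).1
          · linear_combination (X - Polynomial.C (z 1)) * h2 + h3
              + ((Pm A' (fun k => y (k+1)) /ₘ Pm B' (fun k => z (k+1)))) * hMd - hPd
              + (Pm A' (fun k => y (k+1))) * hC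
          · rw [Pm_degree]
            have d2 : ((X - Polynomial.C (z 1))
                * (Pm A' (fun k => y (k+1)) %ₘ Pm B' (fun k => z (k+1)))).degree
                < ((B' + 1 : ℕ) : WithBot ℕ) := by
              rw [degree_mul, degree_X_sub_C]
              have hlt2 := degree_modByMonic_lt (Pm A' (fun k => y (k+1))) hM'
              rw [Pm_degree] at hlt2
              calc (1 : WithBot ℕ) + (Pm A' (fun k => y (k+1)) %ₘ Pm B' (fun k => z (k+1))).degree
                  < 1 + (B' : WithBot ℕ) := WithBot.add_lt_add_left (by simp) hlt2
                _ = ((B' + 1 : ℕ) : WithBot ℕ) := by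
                    push_cast
                    ring
            have d3 : ((Polynomial.C (z 1 - y 1) * Pm A' (fun k => y (k+1)))
                %ₘ Pm (B'+1) z).degree < ((B'+1 : ℕ) : WithBot ℕ) := by
              have := degree_modByMonic_lt
                (Polynomial.C (z 1 - y 1) * Pm A' (fun k => y (k+1))) hM
              rwa [Pm_degree] at this
            exact lt_of_le_of_lt (degree_add_le _ _) (max_lt d2 d3)
        rw [hq, coeff_add, C_mul_divByMonic _ _ _ hM, coeff_C_mul, IH1, IH2]
        obtain ⟨c, hc⟩ : ∃ c, A' - B' = c + 1 := ⟨A' - B' - 1, by omega⟩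
        have hc2 : A' - (B' + 1) = c := by omega
        have hc3 : A' + 1 - (B' + 1) = c + 1 := by omega
        rw [hc, hc2, hc3]
        rw [Ssum_rec A' c y z hy (hz _ (by omega))]
        ring


/-- Goulden–Greene type representation of the constant coefficient of the quotient `Q` in the
division of `P = a ∏_{i=1}^A (X−y_i)` by `D = b ∏_{i=1}^B (X−z_i)`:
`Q.coeff 0 = (a/b)(−1)^C ∑_{1 ≤ τ_1 ≤ ⋯ ≤ τ_C ≤ A} ∏_{i=1}^C (y_{τ_i+i−1} − z_{τ_i})`,
with `C = A − B` and the conventions `y_i = 0` for `i > A`, `z_i = 0` for `i > B`. -/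
theorem stmt_9 (A B : ℕ) (hB : 1 ≤ B) (hAB : B ≤ A) (a b : ℝ) (ha : a ≠ 0) (hb : b ≠ 0)
    (y z : ℕ → ℝ) (hy : ∀ i : ℕ, A < i → y i = 0) (hz : ∀ i : ℕ, B < i → z i = 0)
    (Q Rem : Polynomial ℝ)
    (hdiv : Polynomial.C a * ∏ i ∈ Finset.Icc 1 A, (X - Polynomial.C (y i))
      = (Polynomial.C b * ∏ i ∈ Finset.Icc 1 B, (X - Polynomial.C (z i))) * Q + Rem)
    (hRem : Rem.degree < (B : WithBot ℕ)) :
    Q.coeff 0 = (a / b) * (-1 : ℝ) ^ (A - B) *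
      ∑ τ ∈ Finset.univ.filter
        (fun τ : Fin (A - B) → Fin A => ∀ i j : Fin (A - B), i ≤ j → τ i ≤ τ j),
        ∏ i : Fin (A - B), (y ((τ i : ℕ) + 1 + (i : ℕ)) - z ((τ i : ℕ) + 1)) := by
  have hIcc : ∀ (n : ℕ) (w : ℕ → ℝ),
      (∏ i ∈ Finset.Icc 1 n, (X - Polynomial.C (w i))) = Pm n w := by
    intro n w
    rw [Pm, ← Finset.Ico_add_one_right_eq_Icc, Finset.prod_Ico_eq_prod_range]
    refine Finset.prod_congr rfl fun i _ => ?_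
    rw [Nat.add_comm 1 i]
  rw [hIcc A y, hIcc B z] at hdiv
  have hM := Pm_monic B z
  have hu : (Polynomial.C a * Pm A y) /ₘ Pm B z = Polynomial.C b * Q :=
    (div_modByMonic_unique (Polynomial.C b * Q) Rem hM
      ⟨by linear_combination -hdiv, by rw [Pm_degree]; exact hRem⟩).1
  have h2 : Polynomial.C a * (Pm A y /ₘ Pm B z) = Polynomial.C b * Q := by
    rw [← C_mul_divByMonic a _ _ hM, hu]
  have h3 := congrArg (fun p => Polynomial.coeff p 0) h2
  simp only [coeff_C_mul] at h3
  rw [key A B hAB y z hy hz] at h3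
  have h4 : Q.coeff 0 = a / b * ((-1 : ℝ) ^ (A - B) * Ssum A (A - B) y z) := by
    field_simp
    linarith [h3]
  rw [h4, Ssum]
  ring
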